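/- arXiv:2002.12432 — 4 statements merged into one kernel-verified Lean document; each statement's English description precedes it below -/
import Mathlib

section
/- Let A, C, Q be finite nonempty index types and let ρ be a density matrix on ℂ^A ⊗ (ℂ^C ⊗ ℂ^Q) that is classical on C, i.e., ρ_{(a,(i,q)),(a',(i',q'))} = 0 whenever i ≠ i'. Then the conditional von Neumann entropy satisfies H(A|B)_ρ = H(ρ) − H(Tr_A ρ) ≥ −log₂ |Q|; equivalently, log₂ |Q| ≥ −H(A|B)_ρ. -/
open Matrix Kronecker BigOperators Finset ComplexOrder

noncomputable section

/-- A density matrix: a positive semidefinite matrix with unit trace. -/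
def IsDensityMatrix {I : Type*} [Fintype I] (ρ : Matrix I I ℂ) : Prop :=
  ρ.PosSemidef ∧ ρ.trace = 1

/-- von Neumann entropy in base 2, defined via the eigenvalues of a Hermitian matrix
(with the convention `0 * logb 2 0 = 0`, automatic since `Real.logb 2 0 = 0`). -/
def vnEntropy {I : Type*} [Fintype I] [DecidableEq I] (ρ : Matrix I I ℂ) : ℝ :=
  if h : ρ.IsHermitian then -∑ i, h.eigenvalues i * Real.logb 2 (h.eigenvalues i) else 0

/-- Partial trace over the first tensor factor. -/
def ptraceA {A B : Type*} [Fintype A] (ρ : Matrix (A × B) (A × B) ℂ) : Matrix B B ℂ :=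
  Matrix.of fun b b' => ∑ a, ρ (a, b) (a, b')

/-- Partial trace over the second tensor factor. -/
def ptraceB {A B : Type*} [Fintype B] (ρ : Matrix (A × B) (A × B) ℂ) : Matrix A A ℂ :=
  Matrix.of fun a a' => ∑ b, ρ (a, b) (a', b)

/-- Conditional von Neumann entropy `H(A|B)_ρ = H(ρ) − H(Tr_A ρ)`. -/
def condEnt {A B : Type*} [Fintype A] [Fintype B] [DecidableEq A] [DecidableEq B]
    (ρ : Matrix (A × B) (A × B) ℂ) : ℝ :=
  vnEntropy ρ - vnEntropy (ptraceA ρ)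

/-- A POVM: a family of positive semidefinite matrices summing to the identity. -/
def IsPOVM {B T : Type*} [Fintype B] [Fintype T] [DecidableEq B]
    (E : T → Matrix B B ℂ) : Prop :=
  (∀ t, (E t).PosSemidef) ∧ ∑ t, E t = 1

/-- The binary entropy function, base 2. -/
def binH (x : ℝ) : ℝ := -(x * Real.logb 2 x) - (1 - x) * Real.logb 2 (1 - x)

/-- The rank-one projection `|s⟩⟨s|` onto a standard basis vector. -/
def proj {I : Type*} [DecidableEq I] (s : I) : Matrix I I ℂ := Matrix.single s s 1

/-- The rank-one projection `|v⟩⟨v|` onto a vector. -/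
def vecProj {I : Type*} (v : I → ℂ) : Matrix I I ℂ :=
  Matrix.of fun i j => v i * star (v j)

/-- The one-qubit Hadamard matrix `H = (1/√2)[[1,1],[1,−1]]`. -/
def Had : Matrix Bool Bool ℂ :=
  Matrix.of fun a b => (if a && b then -1 else 1) / (Real.sqrt 2 : ℂ)

/-- The n-qubit Hadamard `H^{⊗n}`, acting on bit strings. -/
def HadN (n : ℕ) : Matrix (Fin n → Bool) (Fin n → Bool) ℂ :=
  Matrix.of fun s t => ∏ j, Had (s j) (t j)

/-- The one-qubit unitary mapping the computational basis to the Pauli-Y eigenbasis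
`{(|0⟩ + i|1⟩)/√2, (|0⟩ − i|1⟩)/√2}`. -/
def KY : Matrix Bool Bool ℂ :=
  Matrix.of fun a b =>
    (if a then (if b then -Complex.I else Complex.I) else 1) / (Real.sqrt 2 : ℂ)

/-- `K^{⊗n}` on n qubits. -/
def KYN (n : ℕ) : Matrix (Fin n → Bool) (Fin n → Bool) ℂ :=
  Matrix.of fun s t => ∏ j, KY (s j) (t j)

/-- The measurement projectors on Alice's n qubits: `Π^Z_s = |s⟩⟨s|` (θ = false),
`Π^X_s = H^{⊗n}|s⟩⟨s|H^{⊗n}` (θ = true). -/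
def PiZX (n : ℕ) (θ : Bool) (s : Fin n → Bool) :
    Matrix (Fin n → Bool) (Fin n → Bool) ℂ :=
  if θ then HadN n * proj s * HadN n else proj s

/-- The state obtained by measuring the A register with projectors `P s` (identity on B). -/
def measureA {S A B : Type*} [Fintype S] [Fintype A] [Fintype B] [DecidableEq B]
    (P : S → Matrix A A ℂ) (ρ : Matrix (A × B) (A × B) ℂ) : Matrix (A × B) (A × B) ℂ :=
  ∑ s, (P s ⊗ₖ (1 : Matrix B B ℂ)) * ρ * (P s ⊗ₖ (1 : Matrix B B ℂ))

end

noncomputable section CondEntAux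
open Polynomial

lemma charpoly_conj_unitary {I : Type*} [Fintype I] [DecidableEq I]
    (U M : Matrix I I ℂ) (hU : U * Uᴴ = 1) :
    (U * M * Uᴴ).charpoly = M.charpoly := by
  have hU' : Uᴴ * U = 1 := mul_eq_one_comm.mp hU
  have key : (U * M * Uᴴ).charmatrix = U.map C * M.charmatrix * Uᴴ.map C := by
    unfold Matrix.charmatrix
    rw [mul_sub, sub_mul, RingHom.mapMatrix_apply, RingHom.mapMatrix_apply,
      ← Matrix.map_mul, ← Matrix.map_mul]
    congr 1
    · have hc : U.map (C : ℂ →+* ℂ[X]) * Matrix.scalar I (X : ℂ[X])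
          = Matrix.scalar I (X : ℂ[X]) * U.map C :=
        (Matrix.scalar_commute (X : ℂ[X]) (fun r' => Commute.all _ _) (U.map C)).symm
      rw [hc, mul_assoc, ← Matrix.map_mul, hU]
      simp
  unfold Matrix.charpoly
  rw [key, Matrix.det_mul, Matrix.det_mul, mul_comm, ← mul_assoc, ← Matrix.det_mul,
    ← Matrix.map_mul, hU']
  simp

lemma charpoly_diagonal' {I : Type*} [Fintype I] [DecidableEq I] (v : I → ℂ) :
    (Matrix.diagonal v).charpoly = ∏ i, (X - C (v i)) := by
  have h : (Matrix.diagonal v).charmatrix = Matrix.diagonal (fun i => X - C (v i)) := by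
    refine Matrix.ext fun i j => ?_
    by_cases h : i = j
    · subst h; simp [Matrix.charmatrix_apply_eq]
    · rw [Matrix.charmatrix_apply_ne _ _ _ h, Matrix.diagonal_apply_ne _ h,
        Matrix.diagonal_apply_ne _ h, Polynomial.C_0, neg_zero]
  rw [Matrix.charpoly, h, Matrix.det_diagonal]

lemma charpoly_of_decomp {I : Type*} [Fintype I] [DecidableEq I]
    (M : Matrix I I ℂ) (U : Matrix I I ℂ) (v : I → ℝ) (hU : U * Uᴴ = 1)
    (hdec : M = U * Matrix.diagonal (fun i => ((v i : ℝ) : ℂ)) * Uᴴ) :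
    M.charpoly = ∏ i, (X - C ((v i : ℝ) : ℂ)) := by
  rw [hdec, charpoly_conj_unitary _ _ hU, charpoly_diagonal']

lemma roots_of_decomp {I : Type*} [Fintype I] [DecidableEq I]
    (M : Matrix I I ℂ) (U : Matrix I I ℂ) (v : I → ℝ) (hU : U * Uᴴ = 1)
    (hdec : M = U * Matrix.diagonal (fun i => ((v i : ℝ) : ℂ)) * Uᴴ) :
    M.charpoly.roots = Multiset.map (fun i => ((v i : ℝ) : ℂ)) Finset.univ.val := by
  rw [charpoly_of_decomp M U v hU hdec, Finset.prod_eq_multiset_prod]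
  rw [show (Multiset.map (fun i => X - C ((v i : ℝ) : ℂ)) Finset.univ.val)
      = Multiset.map (fun a => X - C a) (Multiset.map (fun i => ((v i : ℝ) : ℂ)) Finset.univ.val)
    from (Multiset.map_map (fun a => X - C a) (fun i => ((v i : ℝ) : ℂ)) Finset.univ.val).symm]
  exact Polynomial.roots_multiset_prod_X_sub_C _

lemma eig_multiset_eq {I : Type*} [Fintype I] [DecidableEq I]
    (M : Matrix I I ℂ) (hM : M.IsHermitian) (U : Matrix I I ℂ) (d : I → ℝ)
    (hU : U * Uᴴ = 1)
    (hdec : M = U * Matrix.diagonal (fun i => ((d i : ℝ) : ℂ)) * Uᴴ) :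
    Multiset.map hM.eigenvalues Finset.univ.val = Multiset.map d Finset.univ.val := by
  have hV : (hM.eigenvectorUnitary : Matrix I I ℂ) * (hM.eigenvectorUnitary : Matrix I I ℂ)ᴴ = 1 := by
    have := Matrix.mem_unitaryGroup_iff.mp hM.eigenvectorUnitary.2
    simpa [Matrix.star_eq_conjTranspose] using this
  have hdec' : M = (hM.eigenvectorUnitary : Matrix I I ℂ)
      * Matrix.diagonal (fun i => ((hM.eigenvalues i : ℝ) : ℂ))
      * (hM.eigenvectorUnitary : Matrix I I ℂ)ᴴ := by
    have := hM.spectral_theorem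
    rw [Unitary.conjStarAlgAut_apply, Matrix.star_eq_conjTranspose] at this
    exact this
  have h1 := roots_of_decomp M _ _ hV hdec'
  have h2 := roots_of_decomp M U d hU hdec
  have h3 : Multiset.map (fun i => ((hM.eigenvalues i : ℝ) : ℂ)) Finset.univ.val
      = Multiset.map (fun i => ((d i : ℝ) : ℂ)) Finset.univ.val := by rw [← h1, ← h2]
  have h4 : Multiset.map (fun x : ℝ => (x : ℂ)) (Multiset.map hM.eigenvalues Finset.univ.val)
      = Multiset.map (fun x : ℝ => (x : ℂ)) (Multiset.map d Finset.univ.val) := by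
    rw [Multiset.map_map, Multiset.map_map]; exact h3
  exact Multiset.map_injective Complex.ofReal_injective h4

lemma sum_g_eig {I : Type*} [Fintype I] [DecidableEq I]
    (M : Matrix I I ℂ) (hM : M.IsHermitian) (U : Matrix I I ℂ) (d : I → ℝ)
    (hU : U * Uᴴ = 1)
    (hdec : M = U * Matrix.diagonal (fun i => ((d i : ℝ) : ℂ)) * Uᴴ) (g : ℝ → ℝ) :
    ∑ i, g (hM.eigenvalues i) = ∑ i, g (d i) := by
  have h := eig_multiset_eq M hM U d hU hdec
  rw [Finset.sum_eq_multiset_sum, Finset.sum_eq_multiset_sum]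
  rw [show Multiset.map (fun i => g (hM.eigenvalues i)) Finset.univ.val
      = Multiset.map g (Multiset.map hM.eigenvalues Finset.univ.val) from (Multiset.map_map _ _ _).symm,
    show Multiset.map (fun i => g (d i)) Finset.univ.val
      = Multiset.map g (Multiset.map d Finset.univ.val) from (Multiset.map_map _ _ _).symm, h]

lemma diagonal_submatrix_equiv {I J : Type*} [DecidableEq I] [DecidableEq J]
    (v : J → ℂ) (e : I ≃ J) :
    (Matrix.diagonal v).submatrix e e = Matrix.diagonal (fun i => v (e i)) := by
  refine Matrix.ext fun i j => ?_
  by_cases h : i = j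
  · subst h; simp
  · simp [Matrix.submatrix_apply, Matrix.diagonal_apply_ne, h,
      fun hh => h (e.injective hh)]

lemma sum_g_eig_blockDiag {m C I : Type*} [Fintype m] [Fintype C] [Fintype I]
    [DecidableEq m] [DecidableEq C] [DecidableEq I]
    (e : I ≃ m × C) (M : Matrix I I ℂ) (hM : M.IsHermitian)
    (B : C → Matrix m m ℂ) (hB : ∀ i, (B i).IsHermitian)
    (hEq : M = (Matrix.blockDiagonal B).submatrix e e) (g : ℝ → ℝ) :
    ∑ k, g (hM.eigenvalues k) = ∑ i, ∑ p, g ((hB i).eigenvalues p) := by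
  set U0 : Matrix (m × C) (m × C) ℂ :=
    Matrix.blockDiagonal (fun i => ((hB i).eigenvectorUnitary : Matrix m m ℂ)) with hU0def
  have hunit : ∀ i : C, ((hB i).eigenvectorUnitary : Matrix m m ℂ)
      * ((hB i).eigenvectorUnitary : Matrix m m ℂ)ᴴ = 1 := by
    intro i
    have := Matrix.mem_unitaryGroup_iff.mp (hB i).eigenvectorUnitary.2
    simpa [Matrix.star_eq_conjTranspose] using this
  have hU0 : U0 * U0ᴴ = 1 := by
    rw [hU0def, Matrix.blockDiagonal_conjTranspose, ← Matrix.blockDiagonal_mul]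
    rw [show (fun k : C => ((hB k).eigenvectorUnitary : Matrix m m ℂ)
        * ((hB k).eigenvectorUnitary : Matrix m m ℂ)ᴴ) = fun _ => (1 : Matrix m m ℂ)
      from funext fun k => hunit k]
    exact Matrix.blockDiagonal_one
  set d : m × C → ℝ := fun pk => (hB pk.2).eigenvalues pk.1 with hd
  have hBD : Matrix.blockDiagonal B
      = U0 * Matrix.diagonal (fun pk : m × C => ((d pk : ℝ) : ℂ)) * U0ᴴ := by
    rw [show (fun pk : m × C => ((d pk : ℝ) : ℂ))
        = fun pk : m × C => (fun i => (fun p => (((hB i).eigenvalues p : ℝ) : ℂ))) pk.2 pk.1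
      from rfl, ← Matrix.blockDiagonal_diagonal (fun i p => (((hB i).eigenvalues p : ℝ) : ℂ)), hU0def,
      Matrix.blockDiagonal_conjTranspose, ← Matrix.blockDiagonal_mul,
      ← Matrix.blockDiagonal_mul]
    refine congrArg Matrix.blockDiagonal (funext fun i => ?_)
    have := (hB i).spectral_theorem
    rw [Unitary.conjStarAlgAut_apply, Matrix.star_eq_conjTranspose] at this
    exact this
  set U : Matrix I I ℂ := U0.submatrix e e with hU
  have hUu : U * Uᴴ = 1 := by
    rw [hU, Matrix.conjTranspose_submatrix, Matrix.submatrix_mul_equiv,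
      hU0, Matrix.submatrix_one_equiv]
  have hdec : M = U * Matrix.diagonal (fun k : I => ((d (e k) : ℝ) : ℂ)) * Uᴴ := by
    rw [hEq, hBD, hU, Matrix.conjTranspose_submatrix,
      ← diagonal_submatrix_equiv (fun pk : m × C => ((d pk : ℝ) : ℂ)) e,
      Matrix.submatrix_mul_equiv, Matrix.submatrix_mul_equiv]
  have h := sum_g_eig M hM U (fun k => d (e k)) hUu hdec g
  rw [h, Equiv.sum_comp e (fun pk => g (d pk)), Fintype.sum_prod_type]
  exact Finset.sum_comm

lemma trace_eq_sum_eig {I : Type*} [Fintype I] [DecidableEq I]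
    (M : Matrix I I ℂ) (hM : M.IsHermitian) :
    M.trace = ∑ i, ((hM.eigenvalues i : ℝ) : ℂ) := by
  have hdec' : M = (hM.eigenvectorUnitary : Matrix I I ℂ)
      * Matrix.diagonal (fun i => ((hM.eigenvalues i : ℝ) : ℂ))
      * (hM.eigenvectorUnitary : Matrix I I ℂ)ᴴ := by
    have := hM.spectral_theorem
    rw [Unitary.conjStarAlgAut_apply, Matrix.star_eq_conjTranspose] at this
    exact this
  have hV : (hM.eigenvectorUnitary : Matrix I I ℂ) * (hM.eigenvectorUnitary : Matrix I I ℂ)ᴴ = 1 := by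
    have := Matrix.mem_unitaryGroup_iff.mp hM.eigenvectorUnitary.2
    simpa [Matrix.star_eq_conjTranspose] using this
  have hV' : (hM.eigenvectorUnitary : Matrix I I ℂ)ᴴ * (hM.eigenvectorUnitary : Matrix I I ℂ) = 1 :=
    mul_eq_one_comm.mp hV
  conv_lhs => rw [hdec']
  rw [Matrix.trace_mul_comm, ← mul_assoc, hV', one_mul, Matrix.trace_diagonal]

lemma ptraceA_trace {A B : Type*} [Fintype A] [Fintype B] (ρ : Matrix (A × B) (A × B) ℂ) :
    (ptraceA ρ).trace = ρ.trace := by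
  rw [Matrix.trace, Matrix.trace]
  rw [show ∑ p : A × B, ρ.diag p = ∑ a : A, ∑ b : B, ρ (a, b) (a, b) from Fintype.sum_prod_type _]
  rw [Finset.sum_comm]
  rfl

lemma ptraceA_posSemidef {A B : Type*} [Fintype A] [Fintype B] [DecidableEq A]
    (ρ : Matrix (A × B) (A × B) ℂ) (hρ : ρ.PosSemidef) : (ptraceA ρ).PosSemidef := by
  refine Matrix.posSemidef_iff_dotProduct_mulVec.mpr ⟨?_, ?_⟩
  · refine Matrix.ext fun b b' => ?_
    rw [Matrix.conjTranspose_apply]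
    show star (ptraceA ρ b' b) = ptraceA ρ b b'
    rw [show ptraceA ρ b' b = ∑ a, ρ (a, b') (a, b) from rfl,
      show ptraceA ρ b b' = ∑ a, ρ (a, b) (a, b') from rfl, star_sum]
    refine Finset.sum_congr rfl fun a _ => ?_
    have := congrFun (congrFun hρ.1 (a, b)) (a, b')
    rw [Matrix.conjTranspose_apply] at this
    exact this
  · intro x
    set y : A → (A × B → ℂ) := fun a p => if p.1 = a then x p.2 else 0 with hy
    have key : ∀ a : A, dotProduct (star (y a)) (ρ *ᵥ y a)
        = ∑ b, star (x b) * ∑ b', ρ (a, b) (a, b') * x b' := by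
      intro a
      simp only [dotProduct, Matrix.mulVec, Pi.star_apply, hy]
      rw [Fintype.sum_prod_type]
      rw [Finset.sum_eq_single a]
      · refine Finset.sum_congr rfl fun b _ => ?_
        simp only [if_pos rfl]
        congr 1
        rw [Fintype.sum_prod_type, Finset.sum_eq_single a]
        · simp
        · intro a2 _ ha2; simp [ha2]
        · intro h; exact absurd (Finset.mem_univ a) h
      · intro a1 _ ha1
        simp [ha1]
      · intro h; exact absurd (Finset.mem_univ a) h
    have total : dotProduct (star x) ((ptraceA ρ) *ᵥ x)
        = ∑ a : A, dotProduct (star (y a)) (ρ *ᵥ y a) := by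
      simp only [key]
      rw [Finset.sum_comm]
      refine Finset.sum_congr rfl fun b _ => ?_
      simp only [Matrix.mulVec, dotProduct, Pi.star_apply]
      rw [← Finset.mul_sum]
      congr 1
      rw [Finset.sum_comm]
      refine Finset.sum_congr rfl fun b' _ => ?_
      rw [← Finset.sum_mul]
      rfl
    rw [total]
    exact Finset.sum_nonneg fun a _ => hρ.dotProduct_mulVec_nonneg (y a)

lemma F_superadd {k : Type*} [Fintype k] (x : k → ℝ) (hx : ∀ j, 0 ≤ x j) :
    -((∑ j, x j) * Real.logb 2 (∑ j, x j)) ≤ ∑ j, -(x j * Real.logb 2 (x j)) := by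
  set s := ∑ j, x j with hs
  have h1 : -(s * Real.logb 2 s) = ∑ j, -(x j * Real.logb 2 s) := by
    rw [Finset.sum_neg_distrib, ← Finset.sum_mul, ← hs]
  rw [h1]
  refine Finset.sum_le_sum fun j _ => ?_
  rw [neg_le_neg_iff]
  rcases eq_or_lt_of_le (hx j) with h | h
  · rw [← h]; simp
  · refine mul_le_mul_of_nonneg_left ?_ (hx j)
    refine Real.logb_le_logb_of_le (by norm_num) h ?_
    exact Finset.single_le_sum (fun i _ => hx i) (Finset.mem_univ j)

lemma F_group_bound {k : Type*} [Fintype k] [Nonempty k] (μ : k → ℝ) (hμ : ∀ j, 0 ≤ μ j) :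
    ∑ j, -(μ j * Real.logb 2 (μ j)) ≤
      -((∑ j, μ j) * Real.logb 2 (∑ j, μ j))
        + (∑ j, μ j) * Real.logb 2 (Fintype.card k) := by
  set p := ∑ j, μ j with hp
  have hp0 : 0 ≤ p := Finset.sum_nonneg fun j _ => hμ j
  rcases eq_or_lt_of_le hp0 with h0 | hppos
  · have hall : ∀ j, μ j = 0 := by
      intro j
      have := Finset.sum_eq_zero_iff_of_nonneg (fun i _ => hμ i) |>.mp h0.symm
      exact this j (Finset.mem_univ j)
    simp [hall, ← h0]
  · set n : ℝ := (Fintype.card k : ℝ) with hn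
    have hnpos : (0:ℝ) < n := by
      rw [hn]; exact_mod_cast Fintype.card_pos
    set c := p / n with hc
    have hcpos : 0 < c := div_pos hppos hnpos
    have hlog2 : (0:ℝ) < Real.log 2 := Real.log_pos (by norm_num)
    have key : ∀ j, -(μ j * Real.logb 2 (μ j))
        ≤ -(μ j * Real.logb 2 c) + (c - μ j) / Real.log 2 := by
      intro j
      rcases eq_or_lt_of_le (hμ j) with h | h
      · rw [← h]
        simp only [zero_mul, neg_zero, sub_zero, zero_add]
        positivity
      · have hlog : Real.log (c / μ j) ≤ c / μ j - 1 :=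
          Real.log_le_sub_one_of_pos (div_pos hcpos h)
        rw [Real.log_div (ne_of_gt hcpos) (ne_of_gt h)] at hlog
        have h2 : μ j * (Real.log c - Real.log (μ j)) ≤ c - μ j := by
          have := mul_le_mul_of_nonneg_left hlog (le_of_lt h)
          calc μ j * (Real.log c - Real.log (μ j)) ≤ μ j * (c / μ j - 1) := this
            _ = c - μ j := by field_simp
        have h3 : μ j * Real.logb 2 c - μ j * Real.logb 2 (μ j) ≤ (c - μ j) / Real.log 2 := by
          have heq : μ j * Real.logb 2 c - μ j * Real.logb 2 (μ j)
              = (μ j * (Real.log c - Real.log (μ j))) / Real.log 2 := by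
            rw [Real.logb, Real.logb]; ring
          rw [heq]
          exact (div_le_div_iff_of_pos_right hlog2).mpr h2
        linarith
    calc ∑ j, -(μ j * Real.logb 2 (μ j))
        ≤ ∑ j, (-(μ j * Real.logb 2 c) + (c - μ j) / Real.log 2) :=
          Finset.sum_le_sum fun j _ => key j
      _ = -(p * Real.logb 2 c) + (Fintype.card k * c - p) / Real.log 2 := by
          rw [Finset.sum_add_distrib]
          congr 1
          · rw [Finset.sum_neg_distrib, ← Finset.sum_mul, ← hp]
          · rw [← Finset.sum_div, Finset.sum_sub_distrib, Finset.sum_const, ← hp]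
            simp [nsmul_eq_mul]
      _ = -(p * Real.logb 2 c) := by
          rw [hc]; field_simp; rw [hn, sub_self, add_zero]
      _ = -(p * Real.logb 2 p) + p * Real.logb 2 n := by
          rw [hc, Real.logb_div (ne_of_gt hppos) (ne_of_gt hnpos)]
          ring

end CondEntAux

/-- For a state that is classical on the register `C` of `B = C ⊗ Q`, the conditional
von Neumann entropy satisfies `H(A|B)_ρ ≥ −log₂ |Q|`. -/
theorem condEnt_ge_neg_logb_card_of_classical
    {A C Q : Type*} [Fintype A] [Fintype C] [Fintype Q]
    [Nonempty A] [Nonempty C] [Nonempty Q]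
    [DecidableEq A] [DecidableEq C] [DecidableEq Q]
    (ρ : Matrix (A × (C × Q)) (A × (C × Q)) ℂ) (hρ : IsDensityMatrix ρ)
    (hclassical : ∀ (a a' : A) (i i' : C) (q q' : Q),
      i ≠ i' → ρ (a, (i, q)) (a', (i', q')) = 0) :
    vnEntropy ρ - vnEntropy (ptraceA ρ) ≥ -Real.logb 2 (Fintype.card Q) := by
  classical
  set F : ℝ → ℝ := fun t => -(t * Real.logb 2 t) with hF
  have hherm : ρ.IsHermitian := hρ.1.1
  -- blocks of ρ
  set Bk : C → Matrix (A × Q) (A × Q) ℂ :=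
    fun i => ρ.submatrix (fun p : A × Q => (p.1, (i, p.2))) (fun p : A × Q => (p.1, (i, p.2)))
    with hBkdef
  have hBk : ∀ i, (Bk i).PosSemidef := fun i => hρ.1.submatrix _
  -- blocks of ptraceA ρ
  set σm : C → Matrix Q Q ℂ := fun i => ptraceA (Bk i) with hσdef
  have hσ : ∀ i, (σm i).PosSemidef := fun i => ptraceA_posSemidef _ (hBk i)
  have hptr : (ptraceA ρ).PosSemidef := ptraceA_posSemidef ρ hρ.1
  -- the reindexing equivalences
  set e : (A × (C × Q)) ≃ ((A × Q) × C) :=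
    { toFun := fun x => ((x.1, x.2.2), x.2.1)
      invFun := fun y => (y.1.1, (y.2, y.1.2))
      left_inv := fun x => rfl
      right_inv := fun y => rfl } with he
  have hEq : ρ = (Matrix.blockDiagonal Bk).submatrix e e := by
    refine Matrix.ext fun x y => ?_
    obtain ⟨a, i, q⟩ := x
    obtain ⟨a', i', q'⟩ := y
    show ρ (a, (i, q)) (a', (i', q'))
      = Matrix.blockDiagonal Bk ((a, q), i) ((a', q'), i')
    rw [Matrix.blockDiagonal_apply]
    by_cases h : i = i'
    · subst h; rw [if_pos rfl]; rfl
    · rw [if_neg h]; exact hclassical a a' i i' q q' h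
  set e2 : (C × Q) ≃ (Q × C) := Equiv.prodComm C Q with he2
  have hEq2 : ptraceA ρ = (Matrix.blockDiagonal σm).submatrix e2 e2 := by
    refine Matrix.ext fun x y => ?_
    obtain ⟨i, q⟩ := x
    obtain ⟨i', q'⟩ := y
    show ptraceA ρ (i, q) (i', q') = Matrix.blockDiagonal σm (q, i) (q', i')
    rw [Matrix.blockDiagonal_apply]
    by_cases h : i = i'
    · subst h; rw [if_pos rfl]; rfl
    · rw [if_neg h]
      show (∑ a, ρ (a, (i, q)) (a, (i', q'))) = 0
      exact Finset.sum_eq_zero fun a _ => hclassical a a i i' q q' h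
  -- entropies as block sums
  have h1 : ∀ g : ℝ → ℝ, ∑ k, g (hherm.eigenvalues k)
      = ∑ i, ∑ p, g ((hBk i).1.eigenvalues p) :=
    fun g => sum_g_eig_blockDiag e ρ hherm Bk (fun i => (hBk i).1) hEq g
  have h2 : ∀ g : ℝ → ℝ, ∑ k, g (hptr.1.eigenvalues k)
      = ∑ i, ∑ q, g ((hσ i).1.eigenvalues q) :=
    fun g => sum_g_eig_blockDiag e2 (ptraceA ρ) hptr.1 σm (fun i => (hσ i).1) hEq2 g
  -- block traces
  have htr : ∀ i, (∑ q, (hσ i).1.eigenvalues q) = ∑ p, (hBk i).1.eigenvalues p := by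
    intro i
    have hc : ((∑ q, (hσ i).1.eigenvalues q : ℝ) : ℂ)
        = ((∑ p, (hBk i).1.eigenvalues p : ℝ) : ℂ) := by
      push_cast
      rw [← trace_eq_sum_eig _ (hσ i).1, ← trace_eq_sum_eig _ (hBk i).1]
      exact ptraceA_trace (Bk i)
    exact_mod_cast hc
  have htot : (∑ i, ∑ p, (hBk i).1.eigenvalues p) = 1 := by
    have hre : (∑ i, ∑ p, (hBk i).1.eigenvalues p) = ∑ k, hherm.eigenvalues k := by
      have := h1 id
      simpa using this.symm
    have hc : ((∑ i, ∑ p, (hBk i).1.eigenvalues p : ℝ) : ℂ) = 1 := by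
      rw [hre]
      push_cast
      rw [← trace_eq_sum_eig ρ hherm]
      exact hρ.2
    exact_mod_cast hc
  -- entropy formulas
  have hv1 : vnEntropy ρ = ∑ i, ∑ p, F ((hBk i).1.eigenvalues p) := by
    rw [vnEntropy, dif_pos hherm, ← h1 F]
    rw [← Finset.sum_neg_distrib]
  have hv2 : vnEntropy (ptraceA ρ) = ∑ i, ∑ q, F ((hσ i).1.eigenvalues q) := by
    rw [vnEntropy, dif_pos hptr.1, ← h2 F]
    rw [← Finset.sum_neg_distrib]
  -- per-block inequality
  have hn1 : (1 : ℝ) ≤ (Fintype.card Q : ℝ) := by exact_mod_cast Fintype.card_pos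
  have main : ∀ i : C,
      -((∑ p, (hBk i).1.eigenvalues p) * Real.logb 2 (Fintype.card Q))
        ≤ ∑ p, F ((hBk i).1.eigenvalues p) - ∑ q, F ((hσ i).1.eigenvalues q) := by
    intro i
    have hL1 : F (∑ p, (hBk i).1.eigenvalues p) ≤ ∑ p, F ((hBk i).1.eigenvalues p) :=
      F_superadd _ (fun p => (hBk i).eigenvalues_nonneg p)
    have hL2 : ∑ q, F ((hσ i).1.eigenvalues q)
        ≤ F (∑ q, (hσ i).1.eigenvalues q)
          + (∑ q, (hσ i).1.eigenvalues q) * Real.logb 2 (Fintype.card Q) :=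
      F_group_bound _ (fun q => (hσ i).eigenvalues_nonneg q)
    rw [htr i] at hL2
    linarith
  -- assemble
  rw [hv1, hv2, ← Finset.sum_sub_distrib]
  calc -Real.logb 2 (Fintype.card Q)
      = ∑ i, -((∑ p, (hBk i).1.eigenvalues p) * Real.logb 2 (Fintype.card Q)) := by
        rw [Finset.sum_neg_distrib, ← Finset.sum_mul, htot, one_mul]
    _ ≤ ∑ i, (∑ p, F ((hBk i).1.eigenvalues p) - ∑ q, F ((hσ i).1.eigenvalues q)) :=
        Finset.sum_le_sum fun i _ => main i
end

section
/- Let I and B be finite nonempty index types, let (p_i)_{i ∈ I} be a probability distribution on I, and let (σ_i)_{i ∈ I} be density matrices on ℂ^B. Then the von Neumann entropy of the classical-quantum state ρ = ∑_{i ∈ I} p_i |i⟩⟨i| ⊗ σ_i on ℂ^I ⊗ ℂ^B satisfies H(ρ) = H({p_i}) + ∑_{i ∈ I} p_i H(σ_i), where H({p_i}) = −∑_i p_i log₂ p_i is the Shannon entropy of the distribution. -/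
open Matrix Kronecker BigOperators Finset ComplexOrder

section AuxLemmas
open Matrix Polynomial

lemma charpoly_diagonal_multiset {n : Type*} [Fintype n] [DecidableEq n] (d : n → ℂ) :
    (Matrix.diagonal d).charpoly = (Finset.univ.val.map (fun i => X - C (d i))).prod := by
  have h : Matrix.charmatrix (Matrix.diagonal d)
      = Matrix.diagonal (fun i => (X : ℂ[X]) - C (d i)) := by
    ext i j
    by_cases hij : i = j
    · subst hij; simp
    · simp [Matrix.charmatrix_apply_ne _ _ _ hij, Matrix.diagonal_apply_ne _ hij]
  rw [Matrix.charpoly, h, Matrix.det_diagonal, Finset.prod_eq_multiset_prod]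

lemma charpoly_unitary_conj {n : Type*} [Fintype n] [DecidableEq n]
    (U A : Matrix n n ℂ) (hU : U * star U = 1) (hU' : star U * U = 1) :
    (U * A * star U).charpoly = A.charpoly := by
  have hscal : ∀ (V : Matrix n n ℂ[X]), V * Matrix.scalar n (X : ℂ[X]) = Matrix.scalar n X * V := by
    intro V; ext i j; simp [Matrix.scalar_apply, Matrix.mul_diagonal, Matrix.diagonal_mul, mul_comm]
  have key : Matrix.charmatrix (U * A * star U)
      = U.map C * Matrix.charmatrix A * (star U).map C := by
    unfold Matrix.charmatrix
    rw [Matrix.mul_sub, Matrix.sub_mul]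
    congr 1
    · rw [hscal, mul_assoc, ← Matrix.map_mul (f := (C : ℂ →+* ℂ[X])), hU, Matrix.map_one _ (map_zero C) (map_one C), mul_one]
    · simp only [RingHom.mapMatrix_apply]
      rw [← Matrix.map_mul (f := (C : ℂ →+* ℂ[X])), ← Matrix.map_mul (f := (C : ℂ →+* ℂ[X]))]
  rw [Matrix.charpoly, key, Matrix.det_mul, Matrix.det_mul, Matrix.charpoly]
  rw [mul_comm (U.map C).det _, mul_assoc, ← Matrix.det_mul,
    ← Matrix.map_mul (f := (C : ℂ →+* ℂ[X])), hU, Matrix.map_one _ (map_zero C) (map_one C),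
    Matrix.det_one, mul_one]

lemma sum_f_eigenvalues {n m : Type*} [Fintype n] [Fintype m] [DecidableEq n]
    {A : Matrix n n ℂ} (hA : A.IsHermitian) (d : m → ℝ)
    (hchar : A.charpoly = (Finset.univ.val.map (fun j : m => X - C ((d j : ℂ)))).prod)
    (f : ℝ → ℝ) : ∑ i, f (hA.eigenvalues i) = ∑ j, f (d j) := by
  have hUmem := hA.eigenvectorUnitary.2
  have h1 : A.charpoly
      = (Finset.univ.val.map (fun i : n => X - C ((hA.eigenvalues i : ℂ)))).prod := by
    conv_lhs => rw [hA.spectral_theorem]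
    rw [Unitary.conjStarAlgAut_apply, charpoly_unitary_conj _ _ (Unitary.mem_iff.mp hUmem).2 (Unitary.mem_iff.mp hUmem).1]
    exact charpoly_diagonal_multiset _
  have h2 : Finset.univ.val.map (fun i : n => ((hA.eigenvalues i : ℂ)))
      = Finset.univ.val.map (fun j : m => ((d j : ℂ))) := by
    have h := congrArg Polynomial.roots (h1.symm.trans hchar)
    have e1 : (fun i : n => X - C ((hA.eigenvalues i : ℂ)))
        = (fun a => X - C a) ∘ (fun i : n => ((hA.eigenvalues i : ℂ))) := rfl
    have e2 : (fun j : m => X - C ((d j : ℂ)))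
        = (fun a => X - C a) ∘ (fun j : m => ((d j : ℂ))) := rfl
    rwa [e1, e2, ← Multiset.map_map, ← Multiset.map_map,
      roots_multiset_prod_X_sub_C, roots_multiset_prod_X_sub_C] at h
  have h3 : Finset.univ.val.map hA.eigenvalues = Finset.univ.val.map d := by
    have h := congrArg (Multiset.map Complex.re) h2
    simpa [Multiset.map_map, Function.comp] using h
  calc ∑ i, f (hA.eigenvalues i) = ((Finset.univ.val.map hA.eigenvalues).map f).sum := by
        rw [Multiset.map_map]; rfl
    _ = ((Finset.univ.val.map d).map f).sum := by rw [h3]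
    _ = ∑ j, f (d j) := by rw [Multiset.map_map]; rfl

end AuxLemmas

/-- Entropy of a classical-quantum state:
`H(∑ᵢ pᵢ |i⟩⟨i| ⊗ σᵢ) = H({pᵢ}) + ∑ᵢ pᵢ H(σᵢ)`. -/
theorem vnEntropy_cq_state
    {I B : Type*} [Fintype I] [Fintype B] [Nonempty I] [Nonempty B]
    [DecidableEq I] [DecidableEq B]
    (p : I → ℝ) (hp0 : ∀ i, 0 ≤ p i) (hp1 : ∑ i, p i = 1)
    (σ : I → Matrix B B ℂ) (hσ : ∀ i, IsDensityMatrix (σ i))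
    (ρ : Matrix (I × B) (I × B) ℂ)
    (hρ : ρ = ∑ i, (p i : ℂ) • (Matrix.single i i (1 : ℂ) ⊗ₖ σ i)) :
    vnEntropy ρ = (-∑ i, p i * Real.logb 2 (p i)) + ∑ i, p i * vnEntropy (σ i) := by
  classical
  have hσH : ∀ i, (σ i).IsHermitian := fun i => (hσ i).1.1
  set lam : I → B → ℝ := fun i => (hσH i).eigenvalues with hlam
  have hlam0 : ∀ i b, 0 ≤ lam i b := fun i b => (hσ i).1.eigenvalues_nonneg b
  set V : I → Matrix B B ℂ := fun i => ((hσH i).eigenvectorUnitary : Matrix B B ℂ) with hV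
  have hVu : ∀ i, V i * star (V i) = 1 :=
    fun i => (Unitary.mem_iff.mp (hσH i).eigenvectorUnitary.2).2
  have hVu' : ∀ i, star (V i) * V i = 1 :=
    fun i => (Unitary.mem_iff.mp (hσH i).eigenvectorUnitary.2).1
  have hspec : ∀ i, σ i = V i * Matrix.diagonal (RCLike.ofReal ∘ lam i) * star (V i) :=
    fun i => (hσH i).spectral_theorem
  have hlamsum : ∀ i, ∑ b, lam i b = 1 := by
    intro i
    have h1 : (σ i).trace = ((∑ b, lam i b : ℝ) : ℂ) := by
      rw [hspec i, Matrix.trace_mul_cycle, hVu' i, one_mul, Matrix.trace_diagonal]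
      push_cast
      rfl
    have h2 := (hσ i).2
    rw [h1] at h2
    exact_mod_cast h2
  set M : I → Matrix B B ℂ := fun i => (p i : ℂ) • σ i with hM
  have hρblock : ρ = (Matrix.blockDiagonal M).submatrix Prod.swap Prod.swap := by
    rw [hρ]; ext ⟨i, b⟩ ⟨i', b'⟩
    simp only [Matrix.sum_apply, Matrix.smul_apply, Matrix.kroneckerMap_apply,
      Matrix.submatrix_apply, Prod.swap_prod_mk, Matrix.blockDiagonal_apply, hM,
      Matrix.single, Matrix.of_apply, smul_eq_mul, mul_ite, ite_mul, mul_zero, zero_mul,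
      mul_one]
    by_cases h : i = i'
    · subst h
      rw [if_pos rfl, Finset.sum_eq_single i]
      · simp
      · intro k _ hk; simp [hk]
      · simp
    · rw [if_neg h]
      apply Finset.sum_eq_zero
      intro k _
      by_cases hk : k = i
      · subst hk; simp [h]
      · simp [hk]
  have hMspec : ∀ i, M i
      = V i * Matrix.diagonal (fun b => (p i : ℂ) * RCLike.ofReal (lam i b)) * star (V i) := by
    intro i
    show (p i : ℂ) • σ i = _
    rw [hspec i,
      show (fun b => (p i : ℂ) * RCLike.ofReal (lam i b)) = (p i : ℂ) • (RCLike.ofReal ∘ lam i)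
        from rfl,
      Matrix.diagonal_smul, Matrix.mul_smul, Matrix.smul_mul]
  have hW : Matrix.blockDiagonal M = Matrix.blockDiagonal V *
      Matrix.diagonal (fun bi : B × I => (p bi.2 : ℂ) * RCLike.ofReal (lam bi.2 bi.1)) *
      star (Matrix.blockDiagonal V) := by
    calc Matrix.blockDiagonal M
        = Matrix.blockDiagonal (fun i =>
            (V i * Matrix.diagonal fun b => (p i : ℂ) * RCLike.ofReal (lam i b)) * (V i)ᴴ) := by
          exact congrArg Matrix.blockDiagonal
            (funext fun i => by rw [hMspec i, Matrix.star_eq_conjTranspose])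
      _ = Matrix.blockDiagonal
            (fun i => V i * Matrix.diagonal fun b => (p i : ℂ) * RCLike.ofReal (lam i b)) *
          Matrix.blockDiagonal (fun i => (V i)ᴴ) := by rw [Matrix.blockDiagonal_mul]
      _ = (Matrix.blockDiagonal V *
            Matrix.blockDiagonal (fun i => Matrix.diagonal fun b =>
              (p i : ℂ) * RCLike.ofReal (lam i b))) *
          Matrix.blockDiagonal (fun i => (V i)ᴴ) := by rw [Matrix.blockDiagonal_mul]
      _ = Matrix.blockDiagonal V *
          Matrix.diagonal (fun bi : B × I => (p bi.2 : ℂ) * RCLike.ofReal (lam bi.2 bi.1)) *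
          star (Matrix.blockDiagonal V) := by
          rw [Matrix.blockDiagonal_diagonal, ← Matrix.blockDiagonal_conjTranspose,
            Matrix.star_eq_conjTranspose]
  have hWu : Matrix.blockDiagonal V * star (Matrix.blockDiagonal V) = 1 := by
    rw [Matrix.star_eq_conjTranspose, Matrix.blockDiagonal_conjTranspose,
      ← Matrix.blockDiagonal_mul]
    have h1 : (fun k => V k * (V k)ᴴ) = fun _ : I => (1 : Matrix B B ℂ) := by
      funext k; rw [← Matrix.star_eq_conjTranspose]; exact hVu k
    rw [h1]; exact Matrix.blockDiagonal_one
  have hWu' : star (Matrix.blockDiagonal V) * Matrix.blockDiagonal V = 1 := by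
    rw [Matrix.star_eq_conjTranspose, Matrix.blockDiagonal_conjTranspose,
      ← Matrix.blockDiagonal_mul]
    have h1 : (fun k => (V k)ᴴ * V k) = fun _ : I => (1 : Matrix B B ℂ) := by
      funext k; rw [← Matrix.star_eq_conjTranspose]; exact hVu' k
    rw [h1]; exact Matrix.blockDiagonal_one
  have hreidx : ρ = Matrix.reindex (Equiv.prodComm B I) (Equiv.prodComm B I) (Matrix.blockDiagonal M) := by
    rw [hρblock]; rfl
  have hchar : ρ.charpoly = (Finset.univ.val.map
      (fun bi : B × I => Polynomial.X -
        Polynomial.C ((p bi.2 * lam bi.2 bi.1 : ℝ) : ℂ))).prod := by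
    rw [hreidx, Matrix.charpoly_reindex, hW, charpoly_unitary_conj _ _ hWu hWu',
      charpoly_diagonal_multiset]
    congr 1
    apply Multiset.map_congr rfl
    intro bi _
    push_cast
    rfl
  have hρH : ρ.IsHermitian := by
    have hD : (Matrix.blockDiagonal M).IsHermitian := by
      rw [hW]
      unfold Matrix.IsHermitian
      rw [Matrix.star_eq_conjTranspose, Matrix.conjTranspose_mul, Matrix.conjTranspose_mul,
        Matrix.conjTranspose_conjTranspose, Matrix.diagonal_conjTranspose]
      have : star (fun bi : B × I => (p bi.2 : ℂ) * RCLike.ofReal (lam bi.2 bi.1))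
          = fun bi : B × I => (p bi.2 : ℂ) * RCLike.ofReal (lam bi.2 bi.1) := by
        funext bi
        simp [Pi.star_apply, ← Complex.ofReal_mul]
      rw [this, mul_assoc]
    rw [hρblock]
    exact hD.submatrix _
  rw [vnEntropy, dif_pos hρH]
  have hsum := sum_f_eigenvalues hρH (fun bi : B × I => p bi.2 * lam bi.2 bi.1) hchar
      (fun t => t * Real.logb 2 t)
  rw [show ∑ i, hρH.eigenvalues i * Real.logb 2 (hρH.eigenvalues i)
      = ∑ bi : B × I, (p bi.2 * lam bi.2 bi.1) * Real.logb 2 (p bi.2 * lam bi.2 bi.1)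
    from hsum]
  have hσent : ∀ i, vnEntropy (σ i) = -∑ b, lam i b * Real.logb 2 (lam i b) := by
    intro i; rw [vnEntropy, dif_pos (hσH i)]
  simp only [hσent]
  rw [Fintype.sum_prod_type, Finset.sum_comm]
  have key : ∀ i, ∑ b, (p i * lam i b) * Real.logb 2 (p i * lam i b)
      = p i * Real.logb 2 (p i) + p i * ∑ b, lam i b * Real.logb 2 (lam i b) := by
    intro i
    have hpt : ∀ b, (p i * lam i b) * Real.logb 2 (p i * lam i b)
        = (lam i b * (p i * Real.logb 2 (p i))) + p i * (lam i b * Real.logb 2 (lam i b)) := by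
      intro b
      rcases eq_or_lt_of_le (hp0 i) with h | h
      · simp [← h]
      rcases eq_or_lt_of_le (hlam0 i b) with h' | h'
      · simp [← h']
      rw [Real.logb_mul h.ne' h'.ne']; ring
    rw [Finset.sum_congr rfl (fun b _ => hpt b), Finset.sum_add_distrib, ← Finset.sum_mul,
      hlamsum i, one_mul, ← Finset.mul_sum]
  simp only [key]
  rw [Finset.sum_add_distrib, neg_add]
  congr 1
  rw [← Finset.sum_neg_distrib]
  apply Finset.sum_congr rfl
  intro i _
  ring
end

section
/- (Fano-type inequality for approximate string recovery.) Let n ≥ 1 be an integer and α ∈ [0, 1/2). Let q be a joint probability distribution on {0,1}^n × {0,1}^n (random variables S and S'), let p = ∑_{(s,s') : d_H(s,s') ≤ αn} q(s,s') be the probability that S and S' agree on at least (1−α)n bits, and let M = ∑_{i=0}^{⌊αn⌋} C(n,i). Then the classical conditional Shannon entropy satisfies H(S|S')_q ≤ H(p) + p log₂ M + (1−p) log₂(2^n − M), where H(x) = −x log₂ x − (1−x) log₂(1−x) is the binary entropy function. -/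
open Matrix Kronecker BigOperators Finset ComplexOrder

lemma card_hamming_eq (n : ℕ) (s' : Fin n → Bool) (i : ℕ) :
    (Finset.univ.filter fun s : Fin n → Bool => hammingDist s s' = i).card = n.choose i := by
  have hpc : n.choose i = (Finset.powersetCard i (Finset.univ : Finset (Fin n))).card := by
    simp [Finset.card_powersetCard]
  rw [hpc]
  refine Finset.card_bij' (fun s _ => Finset.univ.filter fun j => s j ≠ s' j)
    (fun A _ => fun j => if j ∈ A then !(s' j) else s' j) ?_ ?_ ?_ ?_
  · intro s hs
    simp only [Finset.mem_filter, Finset.mem_univ, true_and] at hs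
    simp only [Finset.mem_powersetCard_univ]
    simpa [hammingDist] using hs
  · intro A hA
    simp only [Finset.mem_filter, Finset.mem_univ, true_and]
    rw [Finset.mem_powersetCard_univ] at hA
    rw [← hA]
    unfold hammingDist
    congr 1
    ext j
    by_cases h : j ∈ A <;> simp [h]
  · intro s hs
    funext j
    by_cases h : s j = s' j <;> simp [h]
    revert h; cases s j <;> cases s' j <;> simp
  · intro A hA
    ext j
    simp only [Finset.mem_filter, Finset.mem_univ, true_and]
    by_cases h : j ∈ A <;> simp [h]

lemma card_hamming_le (n : ℕ) (s' : Fin n → Bool) (k : ℕ) :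
    (Finset.univ.filter fun s : Fin n → Bool => hammingDist s s' ≤ k).card
      = ∑ i ∈ Finset.range (k+1), n.choose i := by
  classical
  rw [Finset.card_eq_sum_card_fiberwise (f := fun s => hammingDist s s')
    (t := Finset.range (k+1)) (fun x hx => by
      simp only [Finset.mem_coe, Finset.mem_filter] at hx
      simpa [Nat.lt_succ_iff] using hx.2)]
  refine Finset.sum_congr rfl fun i hi => ?_
  rw [Finset.filter_filter, ← card_hamming_eq n s' i]
  congr 1
  apply Finset.filter_congr
  intro s _
  simp only [Finset.mem_range, Nat.lt_succ_iff] at hi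
  constructor
  · rintro ⟨_, h⟩; exact h
  · intro h; exact ⟨h ▸ hi, h⟩

lemma gibbs_term (x T r : ℝ) (hx : 0 ≤ x) (hxT : x ≤ T) (hr : 0 ≤ r)
    (hpos : 0 < x → 0 < r) :
    x * Real.logb 2 r - x * Real.logb 2 (x / T) ≤ (r * T - x) / Real.log 2 := by
  have hlog2 : 0 < Real.log 2 := Real.log_pos one_lt_two
  rcases hx.eq_or_lt with h | h
  · rw [← h]
    simp only [zero_mul, sub_zero, sub_self]
    have hT : 0 ≤ T := le_trans hx hxT
    positivity
  · have hT : 0 < T := lt_of_lt_of_le h hxT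
    have hr' := hpos h
    have h1 : Real.logb 2 r - Real.logb 2 (x / T) = Real.log (r * T / x) / Real.log 2 := by
      rw [Real.logb, Real.logb, div_sub_div_same]
      congr 1
      rw [Real.log_div (by positivity) h.ne', Real.log_div h.ne' hT.ne',
        Real.log_mul hr'.ne' hT.ne']
      ring
    rw [← mul_sub, h1]
    have h2 : Real.log (r * T / x) ≤ r * T / x - 1 := Real.log_le_sub_one_of_pos (by positivity)
    calc x * (Real.log (r * T / x) / Real.log 2) ≤ x * ((r * T / x - 1) / Real.log 2) := by
          gcongr
      _ = (r * T - x) / Real.log 2 := by field_simp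

lemma mul_logb_div (x c : ℝ) (hx : 0 ≤ x) (hc : c ≠ 0) :
    x * Real.logb 2 (x / c) = x * Real.logb 2 x - x * Real.logb 2 c := by
  rcases hx.eq_or_lt with h | h
  · simp [← h]
  · rw [Real.logb_div h.ne' hc]; ring


/-- **Fano-type inequality for approximate string recovery.**  If `p` is the probability
that `S` and `S'` agree on at least `(1−α)n` bits, then
`H(S|S')_q ≤ H(p) + p·log₂ M + (1−p)·log₂(2ⁿ − M)` where `M = ∑_{i=0}^{⌊αn⌋} C(n,i)`. -/
theorem fano_type_inequality
    (n : ℕ) (hn : 1 ≤ n) (α : ℝ) (hα : α ∈ Set.Ico (0 : ℝ) (1 / 2))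
    (q : (Fin n → Bool) → (Fin n → Bool) → ℝ)
    (hq0 : ∀ s s', 0 ≤ q s s') (hq1 : ∑ s, ∑ s', q s s' = 1)
    (p : ℝ)
    (hp : p = ∑ s, ∑ s', if (hammingDist s s' : ℝ) ≤ α * n then q s s' else 0)
    (M : ℕ) (hM : M = ∑ i ∈ Finset.range (⌊α * n⌋₊ + 1), n.choose i) :
    -∑ s, ∑ s', q s s' * Real.logb 2 (q s s' / (∑ t, q t s')) ≤
      binH p + p * Real.logb 2 M + (1 - p) * Real.logb 2 ((2 : ℝ) ^ n - M) := by
  classical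
  obtain ⟨hα0, hα2⟩ := hα
  set k := ⌊α * n⌋₊ with hk
  have hcond : ∀ d : ℕ, ((d : ℝ) ≤ α * n ↔ d ≤ k) := by
    intro d
    rw [hk, Nat.le_floor_iff (by positivity)]
  have hp' : p = ∑ s, ∑ s', if hammingDist s s' ≤ k then q s s' else 0 := by
    rw [hp]
    exact Finset.sum_congr rfl fun s _ => Finset.sum_congr rfl fun s' _ =>
      if_congr (hcond _) rfl rfl
  -- p bounds
  have hite0 : ∀ s s', (0:ℝ) ≤ if hammingDist s s' ≤ k then q s s' else 0 := by
    intro s s'; split; exacts [hq0 s s', le_rfl]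
  have hite0' : ∀ s s', (0:ℝ) ≤ if hammingDist s s' ≤ k then 0 else q s s' := by
    intro s s'; split; exacts [le_rfl, hq0 s s']
  have hp0 : 0 ≤ p := by
    rw [hp']
    exact Finset.sum_nonneg fun s _ => Finset.sum_nonneg fun s' _ => hite0 s s'
  have hfar : ∑ s, ∑ s', (if hammingDist s s' ≤ k then 0 else q s s') = 1 - p := by
    calc ∑ s, ∑ s', (if hammingDist s s' ≤ k then 0 else q s s')
        = ∑ s, ∑ s', (q s s' - (if hammingDist s s' ≤ k then q s s' else 0)) := by
          refine Finset.sum_congr rfl fun s _ => Finset.sum_congr rfl fun s' _ => ?_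
          split <;> simp
      _ = 1 - p := by
          simp only [Finset.sum_sub_distrib]
          rw [hq1, ← hp']
  have h1p0 : 0 ≤ 1 - p := by
    rw [← hfar]
    exact Finset.sum_nonneg fun s _ => Finset.sum_nonneg fun s' _ => hite0' s s'
  -- M bounds
  have hkn : k < n := by
    have h1 : (k : ℝ) ≤ α * n := Nat.floor_le (by positivity)
    have hn' : (1:ℝ) ≤ (n:ℝ) := by exact_mod_cast hn
    have : (k : ℝ) < n := by nlinarith
    exact_mod_cast this
  have hM1 : 0 < M := by
    rw [hM]
    calc 0 < n.choose 0 := by simp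
      _ ≤ ∑ i ∈ Finset.range (k+1), n.choose i :=
        Finset.single_le_sum (fun i _ => Nat.zero_le _) (by simp)
  have hMlt : M + 1 ≤ 2 ^ n := by
    have hsub : insert n (Finset.range (k+1)) ⊆ Finset.range (n+1) := by
      intro i hi
      simp only [Finset.mem_insert, Finset.mem_range] at hi ⊢
      rcases hi with h | h
      · omega
      · omega
    have hnotin : n ∉ Finset.range (k+1) := by
      simp only [Finset.mem_range]; omega
    calc M + 1 = ∑ i ∈ insert n (Finset.range (k+1)), n.choose i := by
          rw [Finset.sum_insert hnotin, hM, Nat.choose_self]; omega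
      _ ≤ ∑ i ∈ Finset.range (n+1), n.choose i :=
          Finset.sum_le_sum_of_subset hsub
      _ = 2 ^ n := Nat.sum_range_choose n
  have hMr : (0:ℝ) < (M:ℝ) := by exact_mod_cast hM1
  have hMr2 : (M:ℝ) < (2:ℝ)^n := by
    have : (M:ℝ) + 1 ≤ ((2^n : ℕ) : ℝ) := by exact_mod_cast hMlt
    push_cast at this
    linarith
  have hD : (0:ℝ) < (2:ℝ)^n - M := by linarith
  -- the comparison distribution
  set c1 : ℝ := p / M with hc1
  set c2 : ℝ := (1 - p) / ((2:ℝ)^n - M) with hc2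
  set F : (Fin n → Bool) → (Fin n → Bool) → ℝ :=
    fun s s' => if hammingDist s s' ≤ k then c1 else c2 with hF
  have hF0 : ∀ s s', 0 ≤ F s s' := by
    intro s s'
    simp only [hF]
    split
    · exact div_nonneg hp0 hMr.le
    · exact div_nonneg h1p0 hD.le
  -- q ≤ p on close pairs, q ≤ 1-p on far pairs
  have hqlep : ∀ s0 s0', hammingDist s0 s0' ≤ k → q s0 s0' ≤ p := by
    intro s0 s0' hclose
    rw [hp']
    have h1 : (if hammingDist s0 s0' ≤ k then q s0 s0' else 0)
        ≤ ∑ s', if hammingDist s0 s' ≤ k then q s0 s' else 0 :=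
      Finset.single_le_sum (fun s' _ => hite0 s0 s') (Finset.mem_univ s0')
    have h2 : (∑ s', if hammingDist s0 s' ≤ k then q s0 s' else 0)
        ≤ ∑ s, ∑ s', if hammingDist s s' ≤ k then q s s' else 0 :=
      Finset.single_le_sum
        (fun s _ => Finset.sum_nonneg fun s' _ => hite0 s s') (Finset.mem_univ s0)
    rw [if_pos hclose] at h1
    linarith
  have hqlef : ∀ s0 s0', ¬ hammingDist s0 s0' ≤ k → q s0 s0' ≤ 1 - p := by
    intro s0 s0' hfarr
    rw [← hfar]
    have h1 : (if hammingDist s0 s0' ≤ k then 0 else q s0 s0')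
        ≤ ∑ s', if hammingDist s0 s' ≤ k then 0 else q s0 s' :=
      Finset.single_le_sum (fun s' _ => hite0' s0 s') (Finset.mem_univ s0')
    have h2 : (∑ s', if hammingDist s0 s' ≤ k then 0 else q s0 s')
        ≤ ∑ s, ∑ s', if hammingDist s s' ≤ k then 0 else q s s' :=
      Finset.single_le_sum
        (fun s _ => Finset.sum_nonneg fun s' _ => hite0' s s') (Finset.mem_univ s0)
    rw [if_neg hfarr] at h1
    linarith
  have hFpos : ∀ s s', 0 < q s s' → 0 < F s s' := by
    intro s s' hqpos
    simp only [hF]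
    split
    case isTrue h =>
      have := hqlep s s' h
      exact div_pos (by linarith) hMr
    case isFalse h =>
      have := hqlef s s' h
      exact div_pos (by linarith) hD
  -- each column of F sums to 1
  have hcard : ∀ s' : Fin n → Bool,
      (Finset.univ.filter fun s => hammingDist s s' ≤ k).card = M := by
    intro s'
    rw [card_hamming_le, hM]
  have hcardU : Fintype.card (Fin n → Bool) = 2 ^ n := by
    simp [Fintype.card_fun]
  have hsumF : ∀ s', ∑ s, F s s' = 1 := by
    intro s'
    simp only [hF]
    rw [Finset.sum_ite, Finset.sum_const, Finset.sum_const, Finset.filter_not,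
      Finset.card_sdiff_of_subset (Finset.filter_subset _ _), Finset.card_univ, hcardU, hcard s']
    have hMle : M ≤ 2 ^ n := by omega
    rw [nsmul_eq_mul, nsmul_eq_mul, Nat.cast_sub hMle, hc1, hc2]
    push_cast
    field_simp
    ring
  -- T facts
  have hTles : ∀ s s', q s s' ≤ ∑ t, q t s' := by
    intro s s'
    exact Finset.single_le_sum (fun t _ => hq0 t s') (Finset.mem_univ s)
  have hsumT : ∑ s' : Fin n → Bool, ∑ t, q t s' = 1 := by
    rw [Finset.sum_comm]; exact hq1
  -- Gibbs step
  have key : (∑ s, ∑ s', q s s' * Real.logb 2 (F s s'))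
      ≤ ∑ s, ∑ s', q s s' * Real.logb 2 (q s s' / (∑ t, q t s')) := by
    have hdiff : ∑ s, ∑ s', (q s s' * Real.logb 2 (F s s')
          - q s s' * Real.logb 2 (q s s' / (∑ t, q t s')))
        ≤ ∑ s, ∑ s', (F s s' * (∑ t, q t s') - q s s') / Real.log 2 := by
      refine Finset.sum_le_sum fun s _ => Finset.sum_le_sum fun s' _ => ?_
      exact gibbs_term _ _ _ (hq0 s s') (hTles s s') (hF0 s s') (hFpos s s')
    have hFT : ∑ s, ∑ s', F s s' * (∑ t, q t s') = 1 := by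
      rw [Finset.sum_comm]
      calc ∑ s', ∑ s, F s s' * (∑ t, q t s')
          = ∑ s', (∑ s, F s s') * (∑ t, q t s') := by
            refine Finset.sum_congr rfl fun s' _ => ?_
            rw [Finset.sum_mul]
        _ = ∑ s', ∑ t, q t s' := by
            refine Finset.sum_congr rfl fun s' _ => ?_
            rw [hsumF s', one_mul]
        _ = 1 := hsumT
    have hzero : ∑ s, ∑ s', (F s s' * (∑ t, q t s') - q s s') / Real.log 2 = 0 := by
      simp only [div_eq_mul_inv, ← Finset.sum_mul, Finset.sum_sub_distrib]
      rw [hFT, hq1]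
      simp
    simp only [Finset.sum_sub_distrib] at hdiff
    rw [hzero] at hdiff
    linarith
  -- compute the F-sum
  have hsplit : ∀ s s', q s s' * Real.logb 2 (F s s')
      = (if hammingDist s s' ≤ k then q s s' else 0) * Real.logb 2 c1
        + (if hammingDist s s' ≤ k then 0 else q s s') * Real.logb 2 c2 := by
    intro s s'
    simp only [hF]
    split <;> ring
  have hfinal : ∑ s, ∑ s', q s s' * Real.logb 2 (F s s')
      = p * Real.logb 2 c1 + (1 - p) * Real.logb 2 c2 := by
    calc ∑ s, ∑ s', q s s' * Real.logb 2 (F s s')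
        = ∑ s, ∑ s', ((if hammingDist s s' ≤ k then q s s' else 0) * Real.logb 2 c1
            + (if hammingDist s s' ≤ k then 0 else q s s') * Real.logb 2 c2) :=
          Finset.sum_congr rfl fun s _ => Finset.sum_congr rfl fun s' _ => hsplit s s'
      _ = (∑ s, ∑ s', if hammingDist s s' ≤ k then q s s' else 0) * Real.logb 2 c1
          + (∑ s, ∑ s', if hammingDist s s' ≤ k then 0 else q s s') * Real.logb 2 c2 := by
          simp only [Finset.sum_add_distrib, ← Finset.sum_mul]
      _ = p * Real.logb 2 c1 + (1 - p) * Real.logb 2 c2 := by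
          rw [← hp', hfar]
  have hrhs : -(p * Real.logb 2 c1 + (1 - p) * Real.logb 2 c2)
      = binH p + p * Real.logb 2 M + (1 - p) * Real.logb 2 ((2:ℝ)^n - M) := by
    rw [hc1, hc2, mul_logb_div p (M:ℝ) hp0 hMr.ne',
      mul_logb_div (1-p) ((2:ℝ)^n - M) h1p0 hD.ne']
    unfold binH
    ring
  calc -∑ s, ∑ s', q s s' * Real.logb 2 (q s s' / (∑ t, q t s'))
      ≤ -∑ s, ∑ s', q s s' * Real.logb 2 (F s s') := by linarith
    _ = binH p + p * Real.logb 2 M + (1 - p) * Real.logb 2 ((2:ℝ)^n - M) := by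
        rw [hfinal, hrhs]
end

section
/- For every integer n ≥ 1 and every α ∈ (0, 1/2] such that αn is an integer, the central-type binomial coefficient satisfies C(n, αn) ≥ 2^{n·H(α)} / √(8 n α (1−α)), where H(α) = −α log₂ α − (1−α) log₂(1−α) is the binary entropy function. -/
open Matrix Kronecker BigOperators Finset ComplexOrder

section StirlingAux
open Stirling Filter Topology


private lemma sqrt_pi_le_stirlingSeq {n : ℕ} (hn : 1 ≤ n) :
    Real.sqrt Real.pi ≤ stirlingSeq n := by
  obtain ⟨m, rfl⟩ : ∃ m, n = m + 1 := ⟨n - 1, by omega⟩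
  have ht : Tendsto (stirlingSeq ∘ Nat.succ) atTop (𝓝 (Real.sqrt Real.pi)) :=
    tendsto_stirlingSeq_sqrt_pi.comp (tendsto_add_atTop_nat 1)
  exact stirlingSeq'_antitone.le_of_tendsto ht m

private lemma stirlingSeq_two : stirlingSeq 2 = Real.exp 1 ^ 2 / 4 := by
  rw [stirlingSeq]
  have h4 : Real.sqrt (2 * (2:ℕ) : ℝ) = 2 := by
    rw [show (2 * (2:ℕ) : ℝ) = 2 ^ 2 by norm_num, Real.sqrt_sq (by norm_num)]
  rw [h4]
  have he : Real.exp 1 ≠ 0 := (Real.exp_pos 1).ne'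
  field_simp [Nat.factorial]
  ring

private lemma stirlingSeq_le_e2 {n : ℕ} (hn : 2 ≤ n) :
    stirlingSeq n ≤ Real.exp 1 ^ 2 / 4 := by
  obtain ⟨m, rfl⟩ : ∃ m, n = (m + 1) + 1 := ⟨n - 2, by omega⟩
  calc stirlingSeq (m + 1 + 1) = (stirlingSeq ∘ Nat.succ) (m + 1) := rfl
    _ ≤ (stirlingSeq ∘ Nat.succ) 1 := stirlingSeq'_antitone (by omega)
    _ = stirlingSeq 2 := rfl
    _ = _ := stirlingSeq_two

private lemma factorial_stirling (n : ℕ) (hn : 1 ≤ n) :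
    (n.factorial : ℝ) * Real.exp 1 ^ n = stirlingSeq n * Real.sqrt (2 * n) * (n : ℝ) ^ n := by
  have hn0 : (0:ℝ) < n := by exact_mod_cast hn
  have h1 : Real.sqrt (2 * n) ≠ 0 := by positivity
  have h2 : ((n:ℝ) / Real.exp 1) ^ n ≠ 0 := by positivity
  rw [stirlingSeq]
  field_simp [div_pow]
  have he : Real.exp 1 ^ n * (Real.exp 1)⁻¹ ^ n = 1 := by
    rw [← mul_pow, mul_inv_cancel₀ (Real.exp_pos 1).ne', one_pow]
  linear_combination ((n : ℝ) ^ n) * he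

private lemma fact_sq_lower (n : ℕ) (hn : 1 ≤ n) :
    Real.pi * (2 * n) * ((n : ℝ) ^ n) ^ 2 ≤ ((n.factorial : ℝ) * Real.exp 1 ^ n) ^ 2 := by
  have hn0 : (0:ℝ) < n := by exact_mod_cast hn
  rw [factorial_stirling n hn]
  have h := sqrt_pi_le_stirlingSeq hn
  have h1 : Real.sqrt Real.pi * Real.sqrt (2 * n) * (n : ℝ) ^ n ≤
      stirlingSeq n * Real.sqrt (2 * n) * (n : ℝ) ^ n := by
    have hnn : (0:ℝ) ≤ Real.sqrt (2 * n) * (n : ℝ) ^ n := by positivity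
    calc Real.sqrt Real.pi * Real.sqrt (2 * n) * (n : ℝ) ^ n
        = Real.sqrt Real.pi * (Real.sqrt (2 * n) * (n : ℝ) ^ n) := by ring
      _ ≤ stirlingSeq n * (Real.sqrt (2 * n) * (n : ℝ) ^ n) :=
          mul_le_mul_of_nonneg_right h hnn
      _ = _ := by ring
  calc Real.pi * (2 * n) * ((n : ℝ) ^ n) ^ 2
      = (Real.sqrt Real.pi * Real.sqrt (2 * n) * (n : ℝ) ^ n) ^ 2 := by
        rw [mul_pow, mul_pow, Real.sq_sqrt Real.pi_nonneg, Real.sq_sqrt (by positivity)]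
    _ ≤ _ := by
        apply pow_le_pow_left₀ (by positivity) h1

private lemma fact_sq_upper (j : ℕ) (hj : 2 ≤ j) :
    ((j.factorial : ℝ) * Real.exp 1 ^ j) ^ 2 ≤
      (Real.exp 1 ^ 2 / 4) ^ 2 * (2 * j) * ((j : ℝ) ^ j) ^ 2 := by
  have hj0 : (0:ℝ) < j := by exact_mod_cast Nat.lt_of_lt_of_le (by norm_num) hj
  rw [factorial_stirling j (by omega)]
  have h := stirlingSeq_le_e2 hj
  have h1 : stirlingSeq j * Real.sqrt (2 * j) * (j : ℝ) ^ j ≤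
      (Real.exp 1 ^ 2 / 4) * Real.sqrt (2 * j) * (j : ℝ) ^ j := by
    have hnn : (0:ℝ) ≤ Real.sqrt (2 * j) * (j : ℝ) ^ j := by positivity
    calc stirlingSeq j * Real.sqrt (2 * j) * (j : ℝ) ^ j
        = stirlingSeq j * (Real.sqrt (2 * j) * (j : ℝ) ^ j) := by ring
      _ ≤ (Real.exp 1 ^ 2 / 4) * (Real.sqrt (2 * j) * (j : ℝ) ^ j) :=
          mul_le_mul_of_nonneg_right h hnn
      _ = _ := by ring
  have hs : 0 ≤ stirlingSeq j * Real.sqrt (2 * j) * (j : ℝ) ^ j := by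
    have := stirlingSeq'_pos (j - 1)
    have hj' : j - 1 + 1 = j := by omega
    rw [hj'] at this
    positivity
  calc (stirlingSeq j * Real.sqrt (2 * j) * (j : ℝ) ^ j) ^ 2
      ≤ ((Real.exp 1 ^ 2 / 4) * Real.sqrt (2 * j) * (j : ℝ) ^ j) ^ 2 :=
        pow_le_pow_left₀ hs h1 2
    _ = (Real.exp 1 ^ 2 / 4) ^ 2 * (2 * j) * ((j : ℝ) ^ j) ^ 2 := by
        rw [mul_pow, mul_pow, Real.sq_sqrt (by positivity)]

private lemma numeric_e8 : Real.exp 1 ^ 8 ≤ 1024 * Real.pi := by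
  have he : Real.exp 1 ≤ 2.7182818286 := Real.exp_one_lt_d9.le
  have hπ : (3.141592 : ℝ) ≤ Real.pi := Real.pi_gt_d6.le
  calc Real.exp 1 ^ 8 ≤ (2.7182818286 : ℝ) ^ 8 :=
        pow_le_pow_left₀ (Real.exp_pos 1).le he 8
    _ ≤ 1024 * 3.141592 := by norm_num
    _ ≤ 1024 * Real.pi := by linarith

private lemma pow_ratio_le (m : ℕ) (hm : 1 ≤ m) :
    (((m : ℝ) + 1) / m) ^ (2 * m) ≤ 8 * m / (m + 1) := by
  have hm0 : (0:ℝ) < m := by exact_mod_cast hm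
  rcases le_or_gt m 12 with h12 | h13
  · interval_cases m <;>
    · rw [div_pow, div_le_div_iff₀ (by positivity) (by positivity)]
      norm_num
  · -- m ≥ 13 : use (1+1/m)^m ≤ e and e^2 ≤ 8m/(m+1)
    have hmr : (13:ℝ) ≤ m := by exact_mod_cast h13
    have h1 : ((m : ℝ) + 1) / m ≤ Real.exp (1 / m) := by
      have := Real.add_one_le_exp (1 / (m:ℝ))
      rw [div_le_iff₀ hm0]
      calc (m:ℝ) + 1 = (1 + 1/m) * m := by field_simp
        _ ≤ Real.exp (1/m) * m := by
            apply mul_le_mul_of_nonneg_right _ hm0.le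
            linarith
    have h2 : (((m : ℝ) + 1) / m) ^ (2 * m) ≤ Real.exp (1 / m) ^ (2 * m) :=
      pow_le_pow_left₀ (by positivity) h1 _
    have h3 : Real.exp (1 / m) ^ (2 * m) = Real.exp 2 := by
      rw [← Real.exp_nat_mul]
      congr 1
      field_simp
      push_cast; ring
    have he : Real.exp 2 ≤ 52 / 7 := by
      have : Real.exp 2 = Real.exp 1 ^ 2 := by
        rw [← Real.exp_nat_mul]; norm_num
      rw [this]
      calc Real.exp 1 ^ 2 ≤ (2.7182818286 : ℝ) ^ 2 :=
            pow_le_pow_left₀ (Real.exp_pos 1).le Real.exp_one_lt_d9.le 2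
        _ ≤ 52 / 7 := by norm_num
    have h4 : (52 : ℝ) / 7 ≤ 8 * m / (m + 1) := by
      rw [div_le_div_iff₀ (by norm_num) (by positivity)]
      linarith
    calc (((m : ℝ) + 1) / m) ^ (2 * m) ≤ Real.exp 2 := h2.trans h3.le
      _ ≤ 52 / 7 := he
      _ ≤ _ := h4

end StirlingAux

/-- Binomial coefficient lower bound via Stirling: for `αn` an integer with `0 < α ≤ 1/2`,
`C(n, αn) ≥ 2^{n·H(α)} / √(8·n·α·(1−α))`. -/
theorem binomial_ge_two_pow_entropy_div_sqrt
    (n : ℕ) (hn : 1 ≤ n) (α : ℝ) (hα : α ∈ Set.Ioc (0 : ℝ) (1 / 2))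
    (k : ℕ) (hk : (k : ℝ) = α * n) :
    (n.choose k : ℝ) ≥
      (2 : ℝ) ^ ((n : ℝ) * binH α) / Real.sqrt (8 * n * α * (1 - α)) := by
  obtain ⟨hα0, hα2⟩ := hα
  have hn0 : (0:ℝ) < n := by exact_mod_cast hn
  have hk0r : (0:ℝ) < k := by rw [hk]; positivity
  have hk1 : 1 ≤ k := by exact_mod_cast hk0r
  have h2kn : 2 * k ≤ n := by
    have : 2 * (k:ℝ) ≤ n := by rw [hk]; nlinarith
    exact_mod_cast this
  have hkn : k ≤ n := by omega
  set m := n - k with hm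
  have hkm : k + m = n := by omega
  have hKM : (k:ℝ) + m = n := by exact_mod_cast hkm
  have hkm' : k ≤ m := by omega
  have hm1 : 1 ≤ m := by omega
  have hm0r : (0:ℝ) < m := by exact_mod_cast hm1
  have h1α : 0 < 1 - α := by linarith
  have hαv : α = (k:ℝ) / n := by rw [hk]; field_simp
  have hMr : (m:ℝ) = (1 - α) * n := by
    have : (m:ℝ) = (n:ℝ) - k := by
      rw [hm]; push_cast [Nat.cast_sub hkn]; ring
    rw [this, hk]; ring
  have h1αv : 1 - α = (m:ℝ) / n := by rw [hMr]; field_simp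
  have h1αv' : 1 - (k:ℝ)/n = (m:ℝ) / n := by rw [← hαv]; exact h1αv
  -- rewrite the RHS numerator
  have hX0 : (0:ℝ) < (n:ℝ)^n / ((k:ℝ)^k * (m:ℝ)^m) := by positivity
  have hexp : (n:ℝ) * binH α = Real.logb 2 ((n:ℝ)^n / ((k:ℝ)^k * (m:ℝ)^m)) := by
    rw [binH, hαv, h1αv',
      Real.logb_div hk0r.ne' hn0.ne', Real.logb_div hm0r.ne' hn0.ne',
      Real.logb_div (pow_ne_zero _ hn0.ne')
        (mul_ne_zero (pow_ne_zero _ hk0r.ne') (pow_ne_zero _ hm0r.ne')),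
      Real.logb_mul (pow_ne_zero _ hk0r.ne') (pow_ne_zero _ hm0r.ne'),
      Real.logb_pow, Real.logb_pow, Real.logb_pow]
    field_simp
    linear_combination (Real.logb 2 (n:ℝ)) * hKM
  have hR : (2:ℝ) ^ ((n:ℝ) * binH α) = (n:ℝ)^n / ((k:ℝ)^k * (m:ℝ)^m) := by
    rw [hexp]
    exact Real.rpow_logb (by norm_num) (by norm_num) hX0
  have hS : 8 * (n:ℝ) * α * (1 - α) = 8 * k * m / n := by
    rw [hαv, h1αv']; field_simp
  set c := (n.choose k : ℝ) with hc
  have hc0 : (0:ℝ) < c := by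
    rw [hc]; exact_mod_cast Nat.choose_pos hkn
  -- the key squared inequality
  have Hmul : ((n:ℝ)^n)^2 * n ≤ c^2 * (8*(k:ℝ)*m) * ((k:ℝ)^k * (m:ℝ)^m)^2 := by
    rcases le_or_gt 2 k with hk2 | hklt
    · -- generic case: Stirling bounds
      have hm2 : 2 ≤ m := le_trans hk2 hkm'
      have hfac : c * ((k.factorial : ℝ) * m.factorial) = n.factorial := by
        have h' := Nat.choose_mul_factorial_mul_factorial hkn
        rw [← hm] at h'
        rw [hc, ← mul_assoc]
        exact_mod_cast h'
      have hA := fact_sq_lower n hn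
      have hB := fact_sq_upper k hk2
      have hC := fact_sq_upper m hm2
      have hE : Real.exp 1 ^ n = Real.exp 1 ^ k * Real.exp 1 ^ m := by
        rw [← pow_add, hkm]
      have key : Real.pi * (2*n) * ((n:ℝ)^n)^2 ≤
          c^2 * ((Real.exp 1 ^ 2 / 4) ^ 2 * (2 * k) * ((k : ℝ) ^ k) ^ 2)
              * ((Real.exp 1 ^ 2 / 4) ^ 2 * (2 * m) * ((m : ℝ) ^ m) ^ 2) := by
        calc Real.pi * (2*n) * ((n:ℝ)^n)^2
            ≤ ((n.factorial : ℝ) * Real.exp 1 ^ n) ^ 2 := hA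
          _ = c^2 * ((k.factorial : ℝ) * Real.exp 1 ^ k)^2
                * ((m.factorial : ℝ) * Real.exp 1 ^ m)^2 := by
              rw [← hfac, hE]; ring
          _ ≤ _ := by
              gcongr <;> first | exact hB | exact hC | positivity
      have step1 : Real.pi * (2*n) * ((n:ℝ)^n)^2 ≤
          c^2 * (16*Real.pi) * ((k:ℝ)*m) * (((k:ℝ)^k * (m:ℝ)^m))^2 := by
        calc Real.pi * (2*n) * ((n:ℝ)^n)^2 ≤ _ := key
          _ = Real.exp 1 ^ 8 * (c^2 * (((k:ℝ)*m)/64) * (((k:ℝ)^k * (m:ℝ)^m))^2) := by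
              ring
          _ ≤ (1024*Real.pi) * (c^2 * (((k:ℝ)*m)/64) * (((k:ℝ)^k * (m:ℝ)^m))^2) :=
              mul_le_mul_of_nonneg_right numeric_e8 (by positivity)
          _ = _ := by ring
      have h2p : (0:ℝ) < 2 * Real.pi := by positivity
      refine le_of_mul_le_mul_left ?_ h2p
      calc 2 * Real.pi * (((n:ℝ)^n)^2 * n) = Real.pi * (2*n) * ((n:ℝ)^n)^2 := by ring
        _ ≤ c^2 * (16*Real.pi) * ((k:ℝ)*m) * (((k:ℝ)^k * (m:ℝ)^m))^2 := step1
        _ = 2 * Real.pi * (c^2 * (8*(k:ℝ)*m) * ((k:ℝ)^k * (m:ℝ)^m)^2) := by ring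
    · -- k = 1
      have hk1' : k = 1 := by omega
      subst hk1'
      have hnm : n = m + 1 := by omega
      have hcn : c = (n:ℝ) := by rw [hc, Nat.choose_one_right]
      have hMn : (m:ℝ) + 1 = n := by rw [hnm]; push_cast; ring
      have h1 : ((n:ℝ)/m)^(2*m) ≤ 8*m/n := by
        rw [← hMn]; exact pow_ratio_le m hm1
      rw [div_pow, div_le_div_iff₀ (by positivity) (by positivity)] at h1
      -- h1 : (n:ℝ)^(2*m) * n ≤ 8*m * (m:ℝ)^(2*m)
      have h3 : (n:ℝ)^(2*m) * n * ((n:ℝ)^2) ≤ 8*(m:ℝ) * (m:ℝ)^(2*m) * ((n:ℝ)^2) :=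
        mul_le_mul_of_nonneg_right h1 (by positivity)
      rw [hcn, hnm]
      push_cast
      calc (((m:ℝ)+1)^(m+1))^2 * ((m:ℝ)+1)
          = ((m:ℝ)+1)^(2*m) * ((m:ℝ)+1) * (((m:ℝ)+1)^2) := by ring
        _ = (n:ℝ)^(2*m) * n * ((n:ℝ)^2) := by rw [hMn]
        _ ≤ 8*(m:ℝ) * (m:ℝ)^(2*m) * ((n:ℝ)^2) := h3
        _ = 8*(m:ℝ) * (m:ℝ)^(2*m) * (((m:ℝ)+1)^2) := by rw [hMn]
        _ = ((m:ℝ)+1)^2 * (8*1*(m:ℝ)) * ((1:ℝ)^1 * (m:ℝ)^m)^2 := by ring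
  -- finish: convert the squared inequality to the stated one
  rw [ge_iff_le, hR, hS]
  have hS0 : (0:ℝ) < 8 * (k:ℝ) * m / n := by positivity
  rw [div_le_iff₀ (Real.sqrt_pos.mpr hS0)]
  have hL0 : (0:ℝ) ≤ (n:ℝ)^n / ((k:ℝ)^k * (m:ℝ)^m) := hX0.le
  have step : ((n:ℝ)^n / ((k:ℝ)^k * (m:ℝ)^m))^2 ≤ c^2 * (8*(k:ℝ)*m/n) := by
    rw [div_pow, div_le_iff₀ (by positivity)]
    have heq : c^2 * (8*(k:ℝ)*m/n) * (((k:ℝ)^k * (m:ℝ)^m)^2)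
        = c^2 * (8*(k:ℝ)*m) * ((k:ℝ)^k * (m:ℝ)^m)^2 / n := by ring
    rw [heq, le_div_iff₀ hn0]
    exact Hmul
  calc (n:ℝ)^n / ((k:ℝ)^k * (m:ℝ)^m)
      = Real.sqrt (((n:ℝ)^n / ((k:ℝ)^k * (m:ℝ)^m))^2) := (Real.sqrt_sq hL0).symm
    _ ≤ Real.sqrt (c^2 * (8*(k:ℝ)*m/n)) := Real.sqrt_le_sqrt step
    _ = c * Real.sqrt (8*(k:ℝ)*m/n) := by
        rw [Real.sqrt_mul (sq_nonneg c), Real.sqrt_sq hc0.le]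
end
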